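/- arXiv:1202.5474 — 6 statements merged into one kernel-verified Lean document; each statement's English description precedes it below -/
import Mathlib

section
/- Let m, n be positive integers, σ > 0 a real number, H₁, H₂ ∈ ℂ^{m×n}, and w₁, w₂ ∈ ℂ^n with H₁w₁ ≠ 0 and H₂w₂ ≠ 0. Define cos²θ = |(H₁w₁)^H(H₂w₂)|² / (‖H₁w₁‖² ‖H₂w₂‖²) and sin²θ = 1 − cos²θ. Then w₁^H H₁^H (σ²I_m + (H₂w₂)(H₂w₂)^H)^{-1} H₁ w₁ = sin²θ · ‖H₁w₁‖²/σ² + cos²θ · ‖H₁w₁‖²/(σ² + ‖H₂w₂‖²). -/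
open Matrix

lemma myVecMulVec_mulVec {m : ℕ} (u v x : Fin m → ℂ) :
    vecMulVec u v *ᵥ x = (v ⬝ᵥ x) • u := by
  ext i
  simp [mulVec, vecMulVec_apply, dotProduct, Finset.mul_sum, Finset.sum_mul]
  congr 1; ext k; ring

lemma myVecMulVec_mul {m : ℕ} (u v w x : Fin m → ℂ) :
    vecMulVec u v * vecMulVec w x = (v ⬝ᵥ w) • vecMulVec u x := by
  ext i j
  simp [Matrix.mul_apply, vecMulVec_apply, dotProduct, Finset.sum_mul, Finset.mul_sum]
  congr 1; ext k; ring

lemma dot_self_eq {m : ℕ} (v : Fin m → ℂ) :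
    star v ⬝ᵥ v = ((∑ i, Complex.normSq (v i) : ℝ) : ℂ) := by
  simp [dotProduct, Complex.normSq_eq_conj_mul_self]

lemma dot_self_re {m : ℕ} (v : Fin m → ℂ) :
    star v ⬝ᵥ v = (((star v ⬝ᵥ v).re : ℝ) : ℂ) := by
  rw [dot_self_eq]; norm_num

lemma dot_self_pos {m : ℕ} (v : Fin m → ℂ) (hv : v ≠ 0) :
    0 < (star v ⬝ᵥ v).re := by
  rw [dot_self_eq, Complex.ofReal_re]
  obtain ⟨i, hi⟩ : ∃ i, v i ≠ 0 := by
    by_contra h; push_neg at h; exact hv (funext h)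
  exact Finset.sum_pos' (fun j _ => Complex.normSq_nonneg _)
    ⟨i, Finset.mem_univ i, Complex.normSq_pos.2 hi⟩

/-- Proposition 1: with `cos²θ = |(H₁w₁)ᴴ(H₂w₂)|²/(‖H₁w₁‖²‖H₂w₂‖²)`
and `sin²θ = 1 − cos²θ`, the MMSE SINR equals
`sin²θ·‖H₁w₁‖²/σ² + cos²θ·‖H₁w₁‖²/(σ² + ‖H₂w₂‖²)`. -/
theorem stmt1 (m n : ℕ) (hm : 0 < m) (hn : 0 < n) (σ : ℝ) (hσ : 0 < σ)
    (H₁ H₂ : Matrix (Fin m) (Fin n) ℂ) (w₁ w₂ : Fin n → ℂ)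
    (h1 : H₁ *ᵥ w₁ ≠ 0) (h2 : H₂ *ᵥ w₂ ≠ 0)
    (c s : ℝ)
    (hc : c = ‖star (H₁ *ᵥ w₁) ⬝ᵥ (H₂ *ᵥ w₂)‖ ^ 2
        / ((star (H₁ *ᵥ w₁) ⬝ᵥ (H₁ *ᵥ w₁)).re * (star (H₂ *ᵥ w₂) ⬝ᵥ (H₂ *ᵥ w₂)).re))
    (hs : s = 1 - c) :
    star w₁ ⬝ᵥ (H₁ᴴ *ᵥ
        ((((σ : ℂ) ^ 2 • (1 : Matrix (Fin m) (Fin m) ℂ)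
            + vecMulVec (H₂ *ᵥ w₂) (star (H₂ *ᵥ w₂)))⁻¹) *ᵥ (H₁ *ᵥ w₁)))
      = ((s * (star (H₁ *ᵥ w₁) ⬝ᵥ (H₁ *ᵥ w₁)).re / σ ^ 2
          + c * (star (H₁ *ᵥ w₁) ⬝ᵥ (H₁ *ᵥ w₁)).re
              / (σ ^ 2 + (star (H₂ *ᵥ w₂) ⬝ᵥ (H₂ *ᵥ w₂)).re) : ℝ) : ℂ) := by
  set u := H₁ *ᵥ w₁ with hu
  set v := H₂ *ᵥ w₂ with hv
  set a : ℝ := (star v ⬝ᵥ v).re with hadef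
  set b : ℝ := (star u ⬝ᵥ u).re with hbdef
  set q : ℝ := ‖star u ⬝ᵥ v‖ ^ 2 with hqdef
  have ha : 0 < a := dot_self_pos v h2
  have hb : 0 < b := dot_self_pos u h1
  have hva : star v ⬝ᵥ v = ((a : ℝ) : ℂ) := dot_self_re v
  have hub : star u ⬝ᵥ u = ((b : ℝ) : ℂ) := dot_self_re u
  have hσ2 : ((σ : ℂ) ^ 2) ≠ 0 := by
    exact pow_ne_zero 2 (by exact_mod_cast hσ.ne')
  have hk : ((σ : ℂ) ^ 2 + (a : ℂ)) ≠ 0 := by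
    have : ((σ ^ 2 + a : ℝ) : ℂ) ≠ 0 := by
      simp only [ne_eq, Complex.ofReal_eq_zero]
      positivity
    simpa using this
  set V : Matrix (Fin m) (Fin m) ℂ := vecMulVec v (star v) with hV
  set M : Matrix (Fin m) (Fin m) ℂ := (σ : ℂ) ^ 2 • 1 + V with hM
  set N : Matrix (Fin m) (Fin m) ℂ :=
    ((σ : ℂ) ^ 2)⁻¹ • ((1 : Matrix (Fin m) (Fin m) ℂ)
      - ((σ : ℂ) ^ 2 + (a : ℂ))⁻¹ • V) with hN
  have hVV : V * V = ((a : ℝ) : ℂ) • V := by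
    rw [hV, myVecMulVec_mul, hva]
  have hσ0 : (σ : ℂ) ≠ 0 := by exact_mod_cast hσ.ne'
  have hMN : M * N = 1 := by
    rw [hM, hN, Matrix.mul_smul, add_mul, Matrix.smul_mul, one_mul,
      Matrix.mul_sub, Matrix.mul_one, Matrix.mul_smul, hVV]
    match_scalars <;> field_simp <;> ring
  have hinv : M⁻¹ = N := Matrix.inv_eq_right_inv hMN
  have hdot : star w₁ ⬝ᵥ (H₁ᴴ *ᵥ (N *ᵥ u)) = star u ⬝ᵥ (N *ᵥ u) := by
    rw [dotProduct_mulVec, hu, star_mulVec]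
  rw [hinv, hdot, hN]
  rw [Matrix.smul_mulVec, Matrix.sub_mulVec, Matrix.one_mulVec,
    Matrix.smul_mulVec, hV, myVecMulVec_mulVec]
  have hq : (star v ⬝ᵥ u) * (star u ⬝ᵥ v) = ((q : ℝ) : ℂ) := by
    rw [star_dotProduct, Complex.star_def, mul_comm, Complex.mul_conj, hqdef]
    push_cast [Complex.sq_norm]
    norm_cast
  rw [dotProduct_smul, dotProduct_sub, dotProduct_smul, dotProduct_smul, hub]
  rw [smul_eq_mul, smul_eq_mul, smul_eq_mul]
  rw [show ((σ:ℂ)^2 + (a:ℂ))⁻¹ * ((star v ⬝ᵥ u) * (star u ⬝ᵥ v))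
      = ((σ:ℂ)^2 + (a:ℂ))⁻¹ * ((q:ℝ):ℂ) from by rw [hq]]
  rw [hs, hc]
  have ha' : ((a : ℝ) : ℂ) ≠ 0 := by exact_mod_cast ha.ne'
  have hb' : ((b : ℝ) : ℂ) ≠ 0 := by exact_mod_cast hb.ne'
  push_cast
  field_simp [ha', hb', hσ2, hk]
  ring
end

section
/- Let m be a positive integer, σ > 0 and t > 0 real numbers, and v₁, v₂ ∈ ℂ^m with v₂ ≠ 0 and c := v₁^H v₂ ≠ 0. Let e^{jφ₁} = c/|c| and set v_δ = t·e^{−jφ₁}·v₂/‖v₂‖. Then |(v₁ + v_δ)^H v₂|² / (σ² + ‖v₁ + v_δ‖²) > |v₁^H v₂|² / (σ² + ‖v₁‖²). -/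
open Matrix

lemma auxIneq (σ t C N a : ℝ) (hσ : 0 < σ) (ht : 0 < t) (hC : 0 < C) (hN : 0 < N)
    (ha : 0 ≤ a) (hCS : C ^ 2 ≤ a * N ^ 2) :
    C ^ 2 / (σ ^ 2 + a) < (C + t * N) ^ 2 / (σ ^ 2 + (a + (2 * t * C / N + t ^ 2))) := by
  have h1 : 0 < σ ^ 2 + a := by positivity
  have h2 : 0 < σ ^ 2 + (a + (2 * t * C / N + t ^ 2)) := by positivity
  rw [div_lt_div_iff₀ h1 h2]
  have h3 : C ^ 2 < (σ ^ 2 + a) * N ^ 2 := by nlinarith [mul_pos (mul_pos hσ hσ) (mul_pos hN hN)]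
  have key : C ^ 2 * (σ ^ 2 + (a + (2 * t * C / N + t ^ 2))) * N
      < (C + t * N) ^ 2 * (σ ^ 2 + a) * N := by
    have e : C ^ 2 * (σ ^ 2 + (a + (2 * t * C / N + t ^ 2))) * N
        = C ^ 2 * (σ ^ 2 + a) * N + 2 * t * C ^ 3 + t ^ 2 * C ^ 2 * N := by
      field_simp; ring
    rw [e]
    nlinarith [mul_pos (mul_pos ht hC) (sub_pos.mpr h3),
      mul_pos (mul_pos (mul_pos ht ht) hN) (sub_pos.mpr h3)]
  exact lt_of_mul_lt_mul_right key hN.le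

lemma inner_piLp_equiv_symm_aux {m : ℕ} (x y : Fin m → ℂ) :
    inner ℂ ((WithLp.equiv 2 (Fin m → ℂ)).symm x) ((WithLp.equiv 2 (Fin m → ℂ)).symm y)
      = star x ⬝ᵥ y := by
  rw [WithLp.equiv_symm_apply, EuclideanSpace.inner_toLp_toLp, dotProduct_comm]

/-- L_side(0) > R_side in Appendix B, Case 2: perturbing `v₁`
along the phase-aligned direction `e^{−jφ₁}·v₂/‖v₂‖` (where `e^{jφ₁} = c/|c|`,
`c = v₁ᴴv₂ ≠ 0`) strictly increases `|v₁ᴴv₂|²/(σ² + ‖v₁‖²)`. -/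
theorem stmt5 (m : ℕ) (hm : 0 < m) (σ t : ℝ) (hσ : 0 < σ) (ht : 0 < t)
    (v₁ v₂ : Fin m → ℂ) (hv₂ : v₂ ≠ 0)
    (c : ℂ) (hc : c = star v₁ ⬝ᵥ v₂) (hc0 : c ≠ 0)
    (vδ : Fin m → ℂ)
    (hvδ : vδ = ((t : ℂ) * (starRingEnd ℂ) (c / (‖c‖ : ℂ))
        / ((Real.sqrt (star v₂ ⬝ᵥ v₂).re : ℂ))) • v₂) :
    ‖star (v₁ + vδ) ⬝ᵥ v₂‖ ^ 2
        / (σ ^ 2 + (star (v₁ + vδ) ⬝ᵥ (v₁ + vδ)).re)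
      > ‖star v₁ ⬝ᵥ v₂‖ ^ 2 / (σ ^ 2 + (star v₁ ⬝ᵥ v₁).re) := by
  classical
  set X : EuclideanSpace ℂ (Fin m) := (WithLp.equiv 2 (Fin m → ℂ)).symm v₁ with hX
  set Y : EuclideanSpace ℂ (Fin m) := (WithLp.equiv 2 (Fin m → ℂ)).symm v₂ with hY
  set C : ℝ := ‖c‖ with hCdef
  have hC0 : 0 < C := norm_pos_iff.mpr hc0
  have hYne : Y ≠ 0 := by simpa [hY, WithLp.equiv] using hv₂
  have hYn : 0 < ‖Y‖ := norm_pos_iff.mpr hYne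
  -- dot products as inner products
  have hyy : star v₂ ⬝ᵥ v₂ = ((‖Y‖ : ℂ)) ^ 2 := by
    rw [← inner_piLp_equiv_symm_aux]
    exact inner_self_eq_norm_sq_to_K Y
  have hyyre : (star v₂ ⬝ᵥ v₂).re = ‖Y‖ ^ 2 := by
    rw [hyy, ← Complex.ofReal_pow, Complex.ofReal_re]
  set N : ℝ := Real.sqrt ((star v₂ ⬝ᵥ v₂).re) with hNdef
  have hNY : N = ‖Y‖ := by rw [hNdef, hyyre, Real.sqrt_sq (norm_nonneg Y)]
  have hN0 : 0 < N := hNY ▸ hYn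
  have hyyN : star v₂ ⬝ᵥ v₂ = ((N : ℂ)) ^ 2 := by rw [hyy, hNY]
  set a : ℝ := (star v₁ ⬝ᵥ v₁).re with hadef
  have hxx : star v₁ ⬝ᵥ v₁ = ((‖X‖ : ℂ)) ^ 2 := by
    rw [← inner_piLp_equiv_symm_aux]
    exact inner_self_eq_norm_sq_to_K X
  have haX : a = ‖X‖ ^ 2 := by
    rw [hadef, hxx, ← Complex.ofReal_pow, Complex.ofReal_re]
  have ha0 : 0 ≤ a := haX ▸ sq_nonneg _
  have hCS : C ^ 2 ≤ a * N ^ 2 := by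
    have h := norm_inner_le_norm (𝕜 := ℂ) X Y
    rw [inner_piLp_equiv_symm_aux, ← hc] at h
    have h2 : C ≤ ‖X‖ * ‖Y‖ := by simpa [hCdef] using h
    have h3 := mul_le_mul h2 h2 hC0.le (by positivity)
    calc C ^ 2 = C * C := sq C
      _ ≤ (‖X‖ * ‖Y‖) * (‖X‖ * ‖Y‖) := h3
      _ = a * N ^ 2 := by rw [haX, hNY]; ring
  -- scalar coefficient
  set k : ℂ := (t : ℂ) * (starRingEnd ℂ) (c / (C : ℂ)) / ((N : ℂ)) with hk
  have hkval : k = (t : ℂ) * (starRingEnd ℂ) c / (C : ℂ) / (N : ℂ) := by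
    rw [hk]; simp [map_div₀, Complex.conj_ofReal]; ring
  have hkstar : star k = (t : ℂ) * c / (C : ℂ) / (N : ℂ) := by
    rw [hkval, Complex.star_def]
    simp [map_div₀, Complex.conj_ofReal, Complex.conj_conj]
  have hvδ' : vδ = k • v₂ := by rw [hvδ, hk, hCdef, hNdef]
  have hcc : c * (starRingEnd ℂ) c = ((C : ℂ)) ^ 2 := by
    rw [Complex.mul_conj, Complex.normSq_eq_norm_sq, hCdef]; push_cast; ring
  have hCne : (C : ℂ) ≠ 0 := by exact_mod_cast hC0.ne'
  have hNne : (N : ℂ) ≠ 0 := by exact_mod_cast hN0.ne'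
  -- numerator
  have hd1 : star (v₁ + vδ) ⬝ᵥ v₂ = c * (((1 + t * N / C : ℝ)) : ℂ) := by
    rw [hvδ', star_add, add_dotProduct, star_smul, smul_dotProduct, ← hc, hyyN]
    simp only [smul_eq_mul]
    rw [hkstar]
    push_cast
    field_simp
  have habs1 : ‖star (v₁ + vδ) ⬝ᵥ v₂‖ = C + t * N := by
    rw [hd1, norm_mul, Complex.norm_real, Real.norm_eq_abs, ← hCdef,
      abs_of_pos (by positivity : (0:ℝ) < 1 + t * N / C)]
    field_simp
  -- denominator
  have hs : k * c + ((star k) * (starRingEnd ℂ) c + (star k) * (k * ((N:ℂ))^2))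
      = (((2 * t * C / N + t ^ 2 : ℝ)) : ℂ) := by
    rw [hkstar, hkval]
    have e : ((t:ℂ) * (starRingEnd ℂ) c / (C:ℂ) / (N:ℂ)) * c
        + (((t:ℂ) * c / (C:ℂ) / (N:ℂ)) * (starRingEnd ℂ) c
          + ((t:ℂ) * c / (C:ℂ) / (N:ℂ)) * (((t:ℂ) * (starRingEnd ℂ) c / (C:ℂ) / (N:ℂ)) * ((N:ℂ))^2))
        = (t:ℂ) * (c * (starRingEnd ℂ) c) / (C:ℂ) / (N:ℂ)
          + ((t:ℂ) * (c * (starRingEnd ℂ) c) / (C:ℂ) / (N:ℂ)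
            + (t:ℂ)^2 * (c * (starRingEnd ℂ) c) * ((N:ℂ))^2 / (((C:ℂ))^2 * ((N:ℂ))^2)) := by
      ring
    rw [e, hcc]
    norm_cast
    field_simp
    ring
  have hd2 : star (v₁ + vδ) ⬝ᵥ (v₁ + vδ)
      = (star v₁ ⬝ᵥ v₁) + (((2 * t * C / N + t ^ 2 : ℝ)) : ℂ) := by
    rw [hvδ', star_add, star_smul, add_dotProduct, dotProduct_add, dotProduct_add,
      smul_dotProduct, smul_dotProduct, dotProduct_smul, dotProduct_smul]
    have h21 : star v₂ ⬝ᵥ v₁ = (starRingEnd ℂ) c := by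
      rw [star_dotProduct, ← hc]; rfl
    rw [← hc, h21, hyyN]
    simp only [smul_eq_mul]
    linear_combination hs
  have hd2re : (star (v₁ + vδ) ⬝ᵥ (v₁ + vδ)).re = a + (2 * t * C / N + t ^ 2) := by
    rw [hd2, Complex.add_re, Complex.ofReal_re, hadef]
  rw [habs1, hd2re, ← hc, ← hCdef]
  exact auxIneq σ t C N a hσ ht hC0 hN0 ha0 hCS
end

section
/- Let m ≥ 2 be an integer, σ > 0 and t > 0 real numbers, and v₁, v₂ ∈ ℂ^m with v₂ ≠ 0, v₁^H v₂ ≠ 0, and v₁ not a scalar multiple of v₂. Then there exists a vector v_δ in the linear span of {v₁, v₂} with ‖v_δ‖ = t such that |(v₁ + v_δ)^H v₂|² / (σ² + ‖v₁ + v_δ‖²) = |v₁^H v₂|² / (σ² + ‖v₁‖²). -/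
open Matrix

set_option maxHeartbeats 1000000

/-- existence claim, eq. (23) of Appendix B, Case 2: there is a
perturbation `vδ` of any prescribed norm `t` in the span of `{v₁, v₂}` keeping
the ratio `|(v₁+vδ)ᴴv₂|²/(σ² + ‖v₁+vδ‖²)` invariant. -/
theorem stmt6 (m : ℕ) (hm : 2 ≤ m) (σ t : ℝ) (hσ : 0 < σ) (ht : 0 < t)
    (v₁ v₂ : Fin m → ℂ) (hv₂ : v₂ ≠ 0) (hinner : star v₁ ⬝ᵥ v₂ ≠ 0)
    (hns : ∀ c : ℂ, v₁ ≠ c • v₂) :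
    ∃ vδ : Fin m → ℂ,
      vδ ∈ Submodule.span ℂ ({v₁, v₂} : Set (Fin m → ℂ)) ∧
      Real.sqrt (star vδ ⬝ᵥ vδ).re = t ∧
      ‖star (v₁ + vδ) ⬝ᵥ v₂‖ ^ 2
          / (σ ^ 2 + (star (v₁ + vδ) ⬝ᵥ (v₁ + vδ)).re)
        = ‖star v₁ ⬝ᵥ v₂‖ ^ 2 / (σ ^ 2 + (star v₁ ⬝ᵥ v₁).re) := by
  classical
  set ι := (WithLp.equiv 2 (Fin m → ℂ)).symm with hι
  have key : ∀ x y : Fin m → ℂ, star x ⬝ᵥ y = @inner ℂ _ _ (ι x) (ι y) :=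
    fun x y => (dotProduct_comm _ _).trans (EuclideanSpace.inner_toLp_toLp x y).symm
  set u₁ : EuclideanSpace ℂ (Fin m) := ι v₁ with hu₁def
  set u₂ : EuclideanSpace ℂ (Fin m) := ι v₂ with hu₂def
  have hu₂ : u₂ ≠ 0 := by
    intro h
    apply hv₂
    have := congrArg (WithLp.equiv 2 (Fin m → ℂ)) h
    simpa [hu₂def, hι] using this
  set n2 : ℝ := ‖u₂‖ ^ 2 with hn2def
  have hn2pos : 0 < n2 := by
    have := norm_pos_iff.mpr hu₂
    positivity
  set a : ℂ := @inner ℂ _ _ u₂ u₁ with hadef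
  have hconj : star v₁ ⬝ᵥ v₂ = (starRingEnd ℂ) a := by
    rw [key v₁ v₂, hadef, inner_conj_symm]
  have ha : a ≠ 0 := by
    intro h
    apply hinner
    rw [hconj, h, map_zero]
  set p : EuclideanSpace ℂ (Fin m) := ((a / (n2 : ℂ))) • u₂ with hpdef
  set q : EuclideanSpace ℂ (Fin m) := u₁ - p with hqdef
  clear_value p q
  have hn2C : (n2 : ℂ) ≠ 0 := by exact_mod_cast hn2pos.ne'
  have hip : @inner ℂ _ _ u₂ p = a := by
    have hne : ‖u₂‖ ≠ 0 := norm_ne_zero_iff.mpr hu₂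
    rw [hpdef, inner_smul_right, inner_self_eq_norm_sq_to_K, hn2def]
    push_cast
    exact div_mul_cancel₀ a (pow_ne_zero 2 (Complex.ofReal_ne_zero.mpr hne))
  have hiq : @inner ℂ _ _ u₂ q = 0 := by
    rw [hqdef, inner_sub_right, hip, hadef, sub_self]
  have hpq : @inner ℂ _ _ p q = 0 := by
    rw [hpdef, inner_smul_left, hiq, mul_zero]
  have hpne : p ≠ 0 := by
    rw [hpdef]
    exact smul_ne_zero (div_ne_zero ha hn2C) hu₂
  have hqne : q ≠ 0 := by
    intro h
    apply hns (a / (n2 : ℂ))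
    have : ι v₁ = ι ((a / (n2 : ℂ)) • v₂) := by
      rw [hι, (show ∀ (c : ℂ) (x : Fin m → ℂ), (WithLp.equiv 2 (Fin m → ℂ)).symm (c • x) = c • (WithLp.equiv 2 (Fin m → ℂ)).symm x from fun _ _ => rfl)]
      rw [← hu₁def, ← hu₂def, ← hpdef]
      exact sub_eq_zero.mp (hqdef ▸ h)
    exact ι.injective this
  set P : ℝ := ‖p‖ ^ 2 with hPdef
  set Q : ℝ := ‖q‖ ^ 2 with hQdef
  have hP : 0 < P := by have := norm_pos_iff.mpr hpne; positivity
  have hQ : 0 < Q := by have := norm_pos_iff.mpr hqne; positivity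
  -- the one-parameter family
  set c : ℝ → ℝ := fun s => Real.sqrt (((1 + s) ^ 2 * (σ ^ 2 + Q) - σ ^ 2) / Q) - 1 with hcdef
  set f : ℝ → ℝ := fun s => s ^ 2 * P + (c s) ^ 2 * Q with hfdef
  have hX : ∀ s : ℝ, 0 ≤ s → 0 ≤ ((1 + s) ^ 2 * (σ ^ 2 + Q) - σ ^ 2) / Q := by
    intro s hs
    have h1 : (1 : ℝ) ≤ (1 + s) ^ 2 := by nlinarith
    have : 0 ≤ (1 + s) ^ 2 * (σ ^ 2 + Q) - σ ^ 2 := by nlinarith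
    positivity
  have hc0 : c 0 = 0 := by
    simp [hcdef, div_self hQ.ne']
  have hf0 : f 0 = 0 := by simp [hfdef, hc0]
  have hcont : Continuous f := by
    apply Continuous.add
    · fun_prop
    · apply Continuous.mul _ continuous_const
      apply Continuous.pow
      apply Continuous.sub _ continuous_const
      exact Real.continuous_sqrt.comp (by fun_prop)
  set M : ℝ := t / Real.sqrt P with hMdef
  have hM : 0 < M := div_pos ht (Real.sqrt_pos.mpr hP)
  have hfM : t ^ 2 ≤ f M := by
    have hMP : M ^ 2 * P = t ^ 2 := by
      rw [hMdef, div_pow, Real.sq_sqrt hP.le]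
      field_simp
    have : 0 ≤ (c M) ^ 2 * Q := by positivity
    rw [hfdef]
    simp only
    nlinarith
  obtain ⟨s₀, hs₀mem, hfs₀⟩ : ∃ s₀ ∈ Set.Icc (0:ℝ) M, f s₀ = t ^ 2 := by
    have := intermediate_value_Icc hM.le hcont.continuousOn (a := 0) (b := M)
    exact this ⟨by rw [hf0]; positivity, by rw [hf0] at *; exact hfM⟩
  have hs₀ : 0 ≤ s₀ := hs₀mem.1
  set c₀ : ℝ := c s₀ with hc₀def
  have hkey : (1 + c₀) ^ 2 * Q = (1 + s₀) ^ 2 * (σ ^ 2 + Q) - σ ^ 2 := by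
    have h1 : 1 + c₀ = Real.sqrt (((1 + s₀) ^ 2 * (σ ^ 2 + Q) - σ ^ 2) / Q) := by
      rw [hc₀def, hcdef]; ring
    rw [h1, Real.sq_sqrt (hX s₀ hs₀), div_mul_cancel₀ _ hQ.ne']
  -- the perturbation
  set vδE : EuclideanSpace ℂ (Fin m) := (s₀ : ℂ) • p + (c₀ : ℂ) • q with hvδEdef
  set vδ : Fin m → ℂ := WithLp.equiv 2 (Fin m → ℂ) vδE with hvδdef
  have hιvδ : ι vδ = vδE := by rw [hvδdef, hι]; exact Equiv.symm_apply_apply (WithLp.equiv 2 (Fin m → ℂ)) vδE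
  -- helper norms
  have hnorm : ∀ α β : ℝ, ‖(α : ℂ) • p + (β : ℂ) • q‖ ^ 2 = α ^ 2 * P + β ^ 2 * Q := by
    intro α β
    rw [norm_add_sq (𝕜 := ℂ), inner_smul_left, inner_smul_right, hpq]
    simp [norm_smul, Complex.norm_real, hPdef, hQdef]
    rw [mul_pow, mul_pow, sq_abs, sq_abs]
  have hre : ∀ x : EuclideanSpace ℂ (Fin m), (@inner ℂ _ _ x x).re = ‖x‖ ^ 2 := by
    intro x
    rw [← RCLike.re_to_complex]
    exact inner_self_eq_norm_sq x
  refine ⟨vδ, ?_, ?_, ?_⟩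
  · -- span membership
    have hval : vδ = (c₀ : ℂ) • v₁ + (((s₀ : ℂ) - (c₀ : ℂ)) * (a / (n2 : ℂ))) • v₂ := by
      apply ι.injective
      rw [hιvδ, hι, (show ∀ x y : Fin m → ℂ, (WithLp.equiv 2 (Fin m → ℂ)).symm (x + y) = (WithLp.equiv 2 (Fin m → ℂ)).symm x + (WithLp.equiv 2 (Fin m → ℂ)).symm y from fun _ _ => rfl), (show ∀ (c : ℂ) (x : Fin m → ℂ), (WithLp.equiv 2 (Fin m → ℂ)).symm (c • x) = c • (WithLp.equiv 2 (Fin m → ℂ)).symm x from fun _ _ => rfl), (show ∀ (c : ℂ) (x : Fin m → ℂ), (WithLp.equiv 2 (Fin m → ℂ)).symm (c • x) = c • (WithLp.equiv 2 (Fin m → ℂ)).symm x from fun _ _ => rfl),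
        ← hι, ← hu₁def, ← hu₂def, hvδEdef, hqdef, hpdef]
      module
    rw [hval]
    exact Submodule.add_mem _
      (Submodule.smul_mem _ _ (Submodule.subset_span (Set.mem_insert _ _)))
      (Submodule.smul_mem _ _ (Submodule.subset_span (Set.mem_insert_of_mem _ rfl)))
  · -- norm
    have : (star vδ ⬝ᵥ vδ).re = ‖vδE‖ ^ 2 := by
      rw [key vδ vδ, hιvδ, hre]
    rw [this, hvδEdef, hnorm s₀ c₀]
    have : s₀ ^ 2 * P + c₀ ^ 2 * Q = t ^ 2 := hfs₀
    rw [this, Real.sqrt_sq ht.le]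
  · -- ratio invariance
    have hw : ι (v₁ + vδ) = ((1 + s₀ : ℝ) : ℂ) • p + ((1 + c₀ : ℝ) : ℂ) • q := by
      rw [hι, (show ∀ x y : Fin m → ℂ, (WithLp.equiv 2 (Fin m → ℂ)).symm (x + y) = (WithLp.equiv 2 (Fin m → ℂ)).symm x + (WithLp.equiv 2 (Fin m → ℂ)).symm y from fun _ _ => rfl), ← hι, ← hu₁def, hιvδ, hvδEdef]
      have : u₁ = p + q := by rw [hqdef]; module
      rw [this]
      push_cast
      module
    have hnum : ‖star (v₁ + vδ) ⬝ᵥ v₂‖ = (1 + s₀) * ‖a‖ := by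
      rw [key (v₁ + vδ) v₂, ← hu₂def, ← inner_conj_symm, hw]
      rw [inner_add_right, inner_smul_right, inner_smul_right, hip, hiq, mul_zero, add_zero]
      rw [Complex.norm_conj, norm_mul, Complex.norm_real, Real.norm_eq_abs,
        abs_of_nonneg (by linarith : (0:ℝ) ≤ 1 + s₀)]
    have hden : (star (v₁ + vδ) ⬝ᵥ (v₁ + vδ)).re = (1 + s₀) ^ 2 * P + (1 + c₀) ^ 2 * Q := by
      rw [key (v₁ + vδ) (v₁ + vδ), hw, hre, hnorm]
    have hnum1 : ‖star v₁ ⬝ᵥ v₂‖ = ‖a‖ := by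
      rw [hconj, Complex.norm_conj]
    have hden1 : (star v₁ ⬝ᵥ v₁).re = P + Q := by
      rw [key v₁ v₁, ← hu₁def,
        show u₁ = ((1:ℝ):ℂ) • p + ((1:ℝ):ℂ) • q by push_cast; rw [hqdef]; module, hre, hnorm]
      ring
    rw [hnum, hden, hnum1, hden1]
    have hs1 : (0:ℝ) < 1 + s₀ := by linarith
    have hD : (0:ℝ) < σ ^ 2 + (P + Q) := by positivity
    have hD2 : σ ^ 2 + ((1 + s₀) ^ 2 * P + (1 + c₀) ^ 2 * Q) = (1 + s₀) ^ 2 * (σ ^ 2 + (P + Q)) := by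
      rw [hkey]; ring
    rw [hD2, mul_pow]
    rw [mul_div_mul_left _ _ (by positivity : ((1 + s₀) ^ 2 : ℝ) ≠ 0)]
end

section
/- Let N_T, N_R be positive integers, σ₂ > 0 a real number, S ≥ 0 a real number, H₁₂, H₂₂ ∈ ℂ^{N_R×N_T}, w₂ ∈ ℂ^{N_T}, and w₁ ∈ ℂ^{N_T} with ‖w₁‖ = 1. Define the Hermitian matrix C = H₁₂^H H₂₂ w₂ w₂^H H₂₂^H H₁₂ − (w₂^H H₂₂^H H₂₂ w₂ − σ₂²S)·(σ₂²I + H₁₂^H H₁₂). Then w₂^H H₂₂^H (σ₂²I + (H₁₂w₁)(H₁₂w₁)^H)^{-1} H₂₂ w₂ = S holds if and only if both w₁^H C w₁ = 0 and w₂^H H₂₂^H H₂₂ w₂ ≥ σ₂²S hold. -/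
open Matrix

private lemma vmv_mulVec {n : ℕ} (u v x : Fin n → ℂ) :
    vecMulVec u v *ᵥ x = (v ⬝ᵥ x) • u := by
  ext i
  simp only [mulVec, vecMulVec_apply, dotProduct, Pi.smul_apply, smul_eq_mul, Finset.sum_mul]
  exact Finset.sum_congr rfl fun j _ => by ring

private lemma star_dot_self {n : ℕ} (v : Fin n → ℂ) :
    star v ⬝ᵥ v = ((∑ i, Complex.normSq (v i) : ℝ) : ℂ) := by
  push_cast
  simp [dotProduct, Complex.normSq_eq_conj_mul_self]

private lemma scalar_iff (σ S A Bb G : ℝ) (hσ : 0 < σ) (hS : 0 ≤ S) (hG : 0 ≤ G)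
    (hBb : 0 ≤ Bb) :
    (σ ^ 2)⁻¹ * (A - (σ ^ 2 + Bb)⁻¹ * G) = S ↔
      (G - (A - σ ^ 2 * S) * (σ ^ 2 + Bb) = 0 ∧ σ ^ 2 * S ≤ A) := by
  have ht : 0 < σ ^ 2 + Bb := by positivity
  have hσ2 : (0:ℝ) < σ ^ 2 := by positivity
  constructor
  · intro h
    have h' : G = (A - σ ^ 2 * S) * (σ ^ 2 + Bb) := by
      field_simp at h
      nlinarith [h]
    refine ⟨by linarith, ?_⟩
    nlinarith [h', hG, ht]
  · rintro ⟨h1, _⟩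
    have h' : G = (A - σ ^ 2 * S) * (σ ^ 2 + Bb) := by linarith
    field_simp
    nlinarith [h']

/-- equivalent transformations, eq. (14): for a unit-norm `w₁`,
the SINR equality `w₂ᴴH₂₂ᴴ(σ₂²I + (H₁₂w₁)(H₁₂w₁)ᴴ)⁻¹H₂₂w₂ = S` holds iff
`w₁ᴴCw₁ = 0` and `w₂ᴴH₂₂ᴴH₂₂w₂ ≥ σ₂²S`, where
`C = H₁₂ᴴH₂₂w₂w₂ᴴH₂₂ᴴH₁₂ − (w₂ᴴH₂₂ᴴH₂₂w₂ − σ₂²S)(σ₂²I + H₁₂ᴴH₁₂)`. -/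
theorem stmt12 (NT NR : ℕ) (hNT : 0 < NT) (hNR : 0 < NR)
    (σ₂ : ℝ) (hσ₂ : 0 < σ₂) (S : ℝ) (hS : 0 ≤ S)
    (H₁₂ H₂₂ : Matrix (Fin NR) (Fin NT) ℂ)
    (w₂ w₁ : Fin NT → ℂ) (hw₁ : Real.sqrt (star w₁ ⬝ᵥ w₁).re = 1)
    (C : Matrix (Fin NT) (Fin NT) ℂ)
    (hC : C = vecMulVec (H₁₂ᴴ *ᵥ (H₂₂ *ᵥ w₂)) (star (H₁₂ᴴ *ᵥ (H₂₂ *ᵥ w₂)))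
        - (star w₂ ⬝ᵥ (H₂₂ᴴ *ᵥ (H₂₂ *ᵥ w₂)) - ((σ₂ : ℂ) ^ 2 * (S : ℂ)))
            • ((σ₂ : ℂ) ^ 2 • (1 : Matrix (Fin NT) (Fin NT) ℂ) + H₁₂ᴴ * H₁₂)) :
    (star w₂ ⬝ᵥ (H₂₂ᴴ *ᵥ
        ((((σ₂ : ℂ) ^ 2 • (1 : Matrix (Fin NR) (Fin NR) ℂ)
            + vecMulVec (H₁₂ *ᵥ w₁) (star (H₁₂ *ᵥ w₁)))⁻¹) *ᵥ (H₂₂ *ᵥ w₂)))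
        = (S : ℂ))
      ↔ (star w₁ ⬝ᵥ (C *ᵥ w₁) = 0
          ∧ σ₂ ^ 2 * S ≤ (star w₂ ⬝ᵥ (H₂₂ᴴ *ᵥ (H₂₂ *ᵥ w₂))).re) := by
  set a : Fin NR → ℂ := H₂₂ *ᵥ w₂ with ha
  set b : Fin NR → ℂ := H₁₂ *ᵥ w₁ with hb
  set A : ℝ := ∑ i, Complex.normSq (a i) with hA
  set Bb : ℝ := ∑ i, Complex.normSq (b i) with hBb
  set γ : ℂ := star b ⬝ᵥ a with hγ
  set G : ℝ := Complex.normSq γ with hG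
  have hBb0 : 0 ≤ Bb := Finset.sum_nonneg fun i _ => Complex.normSq_nonneg _
  have hG0 : 0 ≤ G := Complex.normSq_nonneg _
  have haA : star a ⬝ᵥ a = (A : ℂ) := star_dot_self a
  have hbB : star b ⬝ᵥ b = (Bb : ℂ) := star_dot_self b
  -- unit norm of w₁
  have hw1c : star w₁ ⬝ᵥ w₁ = (1 : ℂ) := by
    have h1 : star w₁ ⬝ᵥ w₁ = ((∑ i, Complex.normSq (w₁ i) : ℝ) : ℂ) := star_dot_self w₁
    have hnn : (0:ℝ) ≤ ∑ i, Complex.normSq (w₁ i) :=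
      Finset.sum_nonneg fun i _ => Complex.normSq_nonneg _
    have hre : (star w₁ ⬝ᵥ w₁).re = ∑ i, Complex.normSq (w₁ i) := by
      rw [h1, Complex.ofReal_re]
    rw [hre] at hw₁
    have h2 : (∑ i, Complex.normSq (w₁ i) : ℝ) = 1 := by
      nlinarith [Real.sq_sqrt hnn]
    rw [h1, h2, Complex.ofReal_one]
  -- basic dot product reductions
  have hdot_w2 : ∀ x : Fin NR → ℂ, star w₂ ⬝ᵥ (H₂₂ᴴ *ᵥ x) = star a ⬝ᵥ x := by
    intro x
    rw [dotProduct_mulVec, ← star_mulVec, ← ha]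
  have hdot_w1 : ∀ x : Fin NR → ℂ, star w₁ ⬝ᵥ (H₁₂ᴴ *ᵥ x) = star b ⬝ᵥ x := by
    intro x
    rw [dotProduct_mulVec, ← star_mulVec, ← hb]
  have hstar_ab : star a ⬝ᵥ b = star γ := by
    rw [hγ, star_dotProduct]
  -- the matrix M and its inverse N
  set Bm : Matrix (Fin NR) (Fin NR) ℂ := vecMulVec b (star b) with hBm
  set M : Matrix (Fin NR) (Fin NR) ℂ :=
    (σ₂ : ℂ) ^ 2 • (1 : Matrix (Fin NR) (Fin NR) ℂ) + Bm with hM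
  have ht0 : (0:ℝ) < σ₂ ^ 2 + Bb := by positivity
  have htne : ((σ₂ ^ 2 + Bb : ℝ) : ℂ) ≠ 0 := by
    simp only [ne_eq, Complex.ofReal_eq_zero]; exact ne_of_gt ht0
  have hσne : ((σ₂ : ℂ) ^ 2) ≠ 0 := by
    have : (σ₂:ℂ) ≠ 0 := by
      simp only [ne_eq, Complex.ofReal_eq_zero]; exact ne_of_gt hσ₂
    exact pow_ne_zero _ this
  set N : Matrix (Fin NR) (Fin NR) ℂ :=
    ((σ₂ : ℂ) ^ 2)⁻¹ • ((1 : Matrix (Fin NR) (Fin NR) ℂ)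
      - (((σ₂ ^ 2 + Bb : ℝ) : ℂ))⁻¹ • Bm) with hN
  have hBB : Bm * Bm = ((Bb : ℂ)) • Bm := by
    ext i j
    simp only [hBm, mul_apply, vecMulVec_apply, Matrix.smul_apply, smul_eq_mul]
    have : ∀ k, b i * star b k * (b k * star b j)
        = (star b k * b k) * (b i * star b j) := fun k => by ring
    rw [Finset.sum_congr rfl fun k _ => this k, ← Finset.sum_mul]
    have : ∑ k, star b k * b k = (Bb : ℂ) := by rw [← hbB]; rfl
    rw [this]
  have hcast : ((σ₂ ^ 2 + Bb : ℝ) : ℂ) = (σ₂:ℂ)^2 + (Bb:ℂ) := by push_cast; ring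
  have hMBm : M * Bm = (((σ₂ ^ 2 + Bb : ℝ) : ℂ)) • Bm := by
    rw [hM, Matrix.add_mul, Matrix.smul_mul, Matrix.one_mul, hBB, ← add_smul, ← hcast]
  have hMN : M * N = 1 := by
    rw [hN, Matrix.mul_smul, Matrix.mul_sub, Matrix.mul_smul, Matrix.mul_one, hMBm,
      smul_smul, inv_mul_cancel₀ htne, one_smul]
    have : M - Bm = (σ₂:ℂ) ^ 2 • (1:Matrix (Fin NR) (Fin NR) ℂ) := by
      rw [hM]; abel
    rw [this, smul_smul, inv_mul_cancel₀ hσne, one_smul]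
  have hMinv : M⁻¹ = N := inv_eq_right_inv hMN
  -- compute N *ᵥ a
  have hNa : N *ᵥ a = ((σ₂:ℂ)^2)⁻¹ • (a - (((σ₂ ^ 2 + Bb : ℝ) : ℂ))⁻¹ • (γ • b)) := by
    rw [hN, smul_mulVec, sub_mulVec, smul_mulVec, one_mulVec, hBm,
      vmv_mulVec, ← hγ]
  -- LHS scalar value
  have hLHS : star w₂ ⬝ᵥ (H₂₂ᴴ *ᵥ (M⁻¹ *ᵥ a))
      = ((σ₂:ℂ)^2)⁻¹ * ((A:ℂ) - (((σ₂ ^ 2 + Bb : ℝ) : ℂ))⁻¹ * (G:ℂ)) := by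
    rw [hdot_w2, hMinv, hNa, dotProduct_smul, dotProduct_sub, dotProduct_smul,
      dotProduct_smul, haA, hstar_ab]
    have : γ * star γ = (G:ℂ) := by
      rw [hG]; exact Complex.mul_conj γ
    rw [smul_eq_mul, smul_eq_mul, smul_eq_mul, this]
  -- RHS quadratic form value
  have haa : star w₂ ⬝ᵥ (H₂₂ᴴ *ᵥ a) = (A:ℂ) := by rw [hdot_w2, haA]
  have hCval : star w₁ ⬝ᵥ (C *ᵥ w₁)
      = (G:ℂ) - ((A:ℂ) - (σ₂:ℂ)^2 * S) * ((σ₂:ℂ)^2 + (Bb:ℂ)) := by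
    rw [hC, sub_mulVec, dotProduct_sub, smul_mulVec, dotProduct_smul, haa]
    rw [vmv_mulVec]
    have h1 : star (H₁₂ᴴ *ᵥ a) ⬝ᵥ w₁ = star γ := by
      rw [star_dotProduct, hdot_w1, ← hγ]
    have h2 : star w₁ ⬝ᵥ ((star (H₁₂ᴴ *ᵥ a) ⬝ᵥ w₁) • (H₁₂ᴴ *ᵥ a)) = star γ * γ := by
      rw [dotProduct_smul, h1, hdot_w1, ← hγ, smul_eq_mul]
    rw [h2]
    have h3 : star w₁ ⬝ᵥ (((σ₂:ℂ)^2 • (1 : Matrix (Fin NT) (Fin NT) ℂ) + H₁₂ᴴ * H₁₂) *ᵥ w₁)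
        = (σ₂:ℂ)^2 + (Bb:ℂ) := by
      rw [add_mulVec, dotProduct_add, smul_mulVec, one_mulVec, dotProduct_smul,
        ← mulVec_mulVec, hdot_w1, ← hb, hbB, smul_eq_mul, hw1c, mul_one]
    rw [h3]
    have h4 : star γ * γ = (G:ℂ) := by
      rw [hG, mul_comm]; exact Complex.mul_conj γ
    rw [h4, smul_eq_mul]
  -- reduce to real statement
  rw [hLHS, hCval, haa]
  have hre : ((A:ℂ)).re = A := by simp
  rw [hre]
  have lhs_iff : ((σ₂:ℂ)^2)⁻¹ * ((A:ℂ) - (((σ₂ ^ 2 + Bb : ℝ) : ℂ))⁻¹ * (G:ℂ)) = (S:ℂ)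
      ↔ (σ₂ ^ 2)⁻¹ * (A - (σ₂ ^ 2 + Bb)⁻¹ * G) = S := by
    rw [show ((σ₂:ℂ)^2)⁻¹ * ((A:ℂ) - (((σ₂ ^ 2 + Bb : ℝ) : ℂ))⁻¹ * (G:ℂ))
        = (((σ₂ ^ 2)⁻¹ * (A - (σ₂ ^ 2 + Bb)⁻¹ * G) : ℝ) : ℂ) by push_cast; ring]
    exact Complex.ofReal_inj
  have rhs_iff : (G:ℂ) - ((A:ℂ) - (σ₂:ℂ)^2 * S) * ((σ₂:ℂ)^2 + (Bb:ℂ)) = 0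
      ↔ G - (A - σ₂ ^ 2 * S) * (σ₂ ^ 2 + Bb) = 0 := by
    rw [show (G:ℂ) - ((A:ℂ) - (σ₂:ℂ)^2 * S) * ((σ₂:ℂ)^2 + (Bb:ℂ))
        = ((G - (A - σ₂ ^ 2 * S) * (σ₂ ^ 2 + Bb) : ℝ) : ℂ) by push_cast; ring,
      show (0:ℂ) = ((0:ℝ):ℂ) by norm_num]
    exact Complex.ofReal_inj
  rw [lhs_iff, rhs_iff]
  exact scalar_iff σ₂ S A Bb G hσ₂ hS hG0 hBb0
end

section
/- Let n be a positive integer, C₁ ∈ ℂ^{n×n} Hermitian positive semidefinite, C₂ ∈ ℂ^{n×n} Hermitian positive definite, A ∈ ℂ^{n×n} Hermitian, and S ∈ ℝ. Define F₄ = {W Hermitian positive semidefinite : Tr(W) = 1, Re Tr(A W) = S} and F₅ = {Q Hermitian positive semidefinite : Re Tr(C₂ Q) = 1, Re Tr(A Q) = S · Re Tr(Q)}. If F₄ is nonempty, then F₅ is nonempty and inf_{W ∈ F₄} Re Tr(C₁ W)/Re Tr(C₂ W) = inf_{Q ∈ F₅} Re Tr(C₁ Q). -/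
open Matrix
open scoped ComplexOrder

section Aux

variable {n : ℕ}

private lemma diag_entry_eq (M : Matrix (Fin n) (Fin n) ℂ) (B : Matrix (Fin n) (Fin n) ℂ)
    (i : Fin n) :
    (B * M * Bᴴ) i i = star (star (B i)) ⬝ᵥ M *ᵥ star (B i) := by
  simp only [mul_apply, conjTranspose_apply, dotProduct, mulVec, Pi.star_apply,
    star_star, Finset.mul_sum, Finset.sum_mul]
  rw [Finset.sum_comm]
  refine Finset.sum_congr rfl fun j _ => Finset.sum_congr rfl fun k _ => ?_
  ring

open scoped MatrixOrder in
private lemma exists_eq_conjTranspose_mul_self (W : Matrix (Fin n) (Fin n) ℂ)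
    (hW : W.PosSemidef) : ∃ B : Matrix (Fin n) (Fin n) ℂ, W = Bᴴ * B := by
  obtain ⟨X, hX, -, h⟩ :=
        sub_zero W ▸ CFC.exists_sqrt_of_isSelfAdjoint_of_quasispectrumRestricts hW.isHermitian
          (QuasispectrumRestricts.nnreal_of_nonneg hW.nonneg)
  refine ⟨X, ?_⟩; rw [sub_zero] at h; rw [← h, show Xᴴ = X from hX.star_eq]

private lemma trace_re_pos (M W : Matrix (Fin n) (Fin n) ℂ)
    (hM : M.PosDef) (hW : W.PosSemidef) (hW0 : W ≠ 0) :
    0 < ((M * W).trace).re := by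
  obtain ⟨B, rfl⟩ := exists_eq_conjTranspose_mul_self W hW
  have hB : B ≠ 0 := fun h => hW0 (by simp [h])
  have htr : (M * (Bᴴ * B)).trace = (B * M * Bᴴ).trace := by
    rw [← Matrix.mul_assoc, trace_mul_comm, ← Matrix.mul_assoc]
  rw [htr, Matrix.trace, Complex.re_sum]
  simp only [Matrix.diag]
  obtain ⟨i, hi⟩ : ∃ i, B i ≠ 0 := by
    by_contra h
    push_neg at h
    exact hB (funext h)
  refine Finset.sum_pos' (fun j _ => ?_) ⟨i, Finset.mem_univ i, ?_⟩
  · rw [diag_entry_eq]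
    exact (Complex.nonneg_iff.mp (hM.posSemidef.dotProduct_mulVec_nonneg _)).1
  · rw [diag_entry_eq]
    refine (Complex.pos_iff.mp (hM.dotProduct_mulVec_pos ?_)).1
    simpa [funext_iff] using hi

private lemma trace_re_pos' (Q : Matrix (Fin n) (Fin n) ℂ)
    (hQ : Q.PosSemidef) (hQ0 : Q ≠ 0) : 0 < (Q.trace).re := by
  have := trace_re_pos 1 Q Matrix.PosDef.one hQ hQ0
  rwa [Matrix.one_mul] at this

private lemma trace_real (Q : Matrix (Fin n) (Fin n) ℂ) (hQ : Q.PosSemidef) :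
    Q.trace = ((Q.trace).re : ℂ) := by
  have h : ∀ i, Q i i = ((Q i i).re : ℂ) := fun i => by
    have h0 : (0 : ℂ) ≤ Q i i := by
      have := hQ.dotProduct_mulVec_nonneg (Pi.single i 1)
      simpa [dotProduct, mulVec, Pi.single_apply] using this
    have := (Complex.nonneg_iff.mp h0).2
    exact (Complex.re_add_im (Q i i)).symm.trans (by rw [← this]; simp)
  rw [Matrix.trace, Complex.re_sum]
  simp only [Matrix.diag]
  push_cast
  exact Finset.sum_congr rfl fun i _ => h i

private lemma smul_posSemidef {Q : Matrix (Fin n) (Fin n) ℂ} (hQ : Q.PosSemidef)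
    {r : ℝ} (hr : 0 ≤ r) : ((r : ℂ) • Q).PosSemidef := by
  refine posSemidef_iff_dotProduct_mulVec.mpr ⟨?_, fun x => ?_⟩
  · rw [Matrix.IsHermitian, conjTranspose_smul, hQ.1]
    simp
  · rw [smul_mulVec, dotProduct_smul, smul_eq_mul]
    exact mul_nonneg (Complex.zero_le_real.mpr hr) (hQ.dotProduct_mulVec_nonneg x)

private lemma smul_trace_re (M Q : Matrix (Fin n) (Fin n) ℂ) (r : ℝ) :
    ((M * ((r : ℂ) • Q)).trace).re = r * ((M * Q).trace).re := by
  rw [mul_smul_comm, trace_smul, smul_eq_mul, Complex.re_ofReal_mul]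

private lemma smul_trace_re' (Q : Matrix (Fin n) (Fin n) ℂ) (r : ℝ) :
    (((r : ℂ) • Q).trace).re = r * ((Q.trace)).re := by
  rw [trace_smul, smul_eq_mul, Complex.re_ofReal_mul]

end Aux

/-- value equality in Lemma 4: the fractional SDR problem (P4)
with feasible set `F₄` and the Charnes–Cooper transformed problem (P5) with
feasible set `F₅` have the same optimal value, and `F₅` is nonempty when `F₄` is. -/
theorem stmt16 (n : ℕ) (hn : 0 < n)
    (C₁ C₂ A : Matrix (Fin n) (Fin n) ℂ)
    (h1 : C₁.PosSemidef) (h2 : C₂.PosDef) (hA : A.IsHermitian) (S : ℝ)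
    (F₄ F₅ : Set (Matrix (Fin n) (Fin n) ℂ))
    (hF₄ : F₄ = {W | W.PosSemidef ∧ W.trace = 1 ∧ ((A * W).trace).re = S})
    (hF₅ : F₅ = {Q | Q.PosSemidef ∧ ((C₂ * Q).trace).re = 1
        ∧ ((A * Q).trace).re = S * (Q.trace).re})
    (hne : F₄.Nonempty) :
    F₅.Nonempty ∧
    sInf ((fun W => ((C₁ * W).trace).re / ((C₂ * W).trace).re) '' F₄)
      = sInf ((fun Q => ((C₁ * Q).trace).re) '' F₅) := by
  -- forward direction: each W ∈ F₄ yields Q ∈ F₅ with equal value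
  have fwd : ∀ W ∈ F₄, ∃ Q ∈ F₅,
      ((C₁ * Q).trace).re = ((C₁ * W).trace).re / ((C₂ * W).trace).re := by
    intro W hW
    rw [hF₄] at hW
    obtain ⟨hWpsd, hWtr, hWA⟩ := hW
    have hW0 : W ≠ 0 := fun h => by simp [h] at hWtr
    set t : ℝ := ((C₂ * W).trace).re with ht
    have htpos : 0 < t := trace_re_pos C₂ W h2 hWpsd hW0
    refine ⟨((t⁻¹ : ℝ) : ℂ) • W, ?_, ?_⟩
    · rw [hF₅]
      refine ⟨smul_posSemidef hWpsd (inv_nonneg.mpr htpos.le), ?_, ?_⟩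
      · rw [smul_trace_re, ← ht, inv_mul_cancel₀ htpos.ne']
      · rw [smul_trace_re, smul_trace_re', hWA, hWtr]
        simp
        ring
    · rw [smul_trace_re]
      exact (div_eq_inv_mul _ _).symm
  -- backward direction
  have bwd : ∀ Q ∈ F₅, ∃ W ∈ F₄,
      ((C₁ * W).trace).re / ((C₂ * W).trace).re = ((C₁ * Q).trace).re := by
    intro Q hQ
    rw [hF₅] at hQ
    obtain ⟨hQpsd, hQC₂, hQA⟩ := hQ
    have hQ0 : Q ≠ 0 := fun h => by simp [h] at hQC₂
    set s : ℝ := (Q.trace).re with hs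
    have hspos : 0 < s := trace_re_pos' Q hQpsd hQ0
    refine ⟨((s⁻¹ : ℝ) : ℂ) • Q, ?_, ?_⟩
    · rw [hF₄]
      refine ⟨smul_posSemidef hQpsd (inv_nonneg.mpr hspos.le), ?_, ?_⟩
      · rw [trace_smul, trace_real Q hQpsd, smul_eq_mul, ← hs]
        push_cast
        rw [inv_mul_cancel₀ (by exact_mod_cast hspos.ne')]
      · rw [smul_trace_re, hQA]
        field_simp
    · rw [smul_trace_re, smul_trace_re, hQC₂, mul_one]
      exact mul_div_cancel_left₀ _ (inv_ne_zero hspos.ne')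
  -- image sets are equal
  have himg : ((fun W => ((C₁ * W).trace).re / ((C₂ * W).trace).re) '' F₄)
      = ((fun Q => ((C₁ * Q).trace).re) '' F₅) := by
    apply Set.Subset.antisymm
    · rintro v ⟨W, hW, rfl⟩
      obtain ⟨Q, hQ, hv⟩ := fwd W hW
      exact ⟨Q, hQ, hv⟩
    · rintro v ⟨Q, hQ, rfl⟩
      obtain ⟨W, hW, hv⟩ := bwd Q hQ
      exact ⟨W, hW, hv⟩
  refine ⟨?_, by rw [himg]⟩
  obtain ⟨W, hW⟩ := hne
  obtain ⟨Q, hQ, -⟩ := fwd W hW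
  exact ⟨Q, hQ⟩
end

section
/- Let n be a positive integer, C₁ ∈ ℂ^{n×n} Hermitian positive semidefinite, C₂ ∈ ℂ^{n×n} Hermitian positive definite, A ∈ ℂ^{n×n} Hermitian, and S ∈ ℝ. Define F₄ = {W Hermitian positive semidefinite : Tr(W) = 1, Re Tr(A W) = S} and F₅ = {Q Hermitian positive semidefinite : Re Tr(C₂ Q) = 1, Re Tr(A Q) = S · Re Tr(Q)}. (i) If W* ∈ F₄ minimizes Re Tr(C₁ W)/Re Tr(C₂ W) over F₄, then Q* = W*/Re Tr(C₂ W*) belongs to F₅ and minimizes Re Tr(C₁ Q) over F₅. (ii) If Q* ∈ F₅ minimizes Re Tr(C₁ Q) over F₅, then Re Tr(Q*) > 0, W* = Q*/Re Tr(Q*) belongs to F₄, and W* minimizes Re Tr(C₁ W)/Re Tr(C₂ W) over F₄. -/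
open Matrix
open scoped ComplexOrder

variable {n : ℕ}

lemma aux_smul_trace_re (C M : Matrix (Fin n) (Fin n) ℂ) (c : ℝ) :
    ((C * (c • M)).trace).re = c * ((C * M).trace).re := by
  rw [Matrix.mul_smul, Matrix.trace_smul]
  simp [Complex.real_smul]

lemma aux_psd_smul {M : Matrix (Fin n) (Fin n) ℂ} (hM : M.PosSemidef) {c : ℝ} (hc : 0 ≤ c) :
    (c • M).PosSemidef := by
  refine Matrix.PosSemidef.of_dotProduct_mulVec_nonneg ?_ ?_
  · show (c • M)ᴴ = c • M
    rw [conjTranspose_smul, star_trivial, hM.1]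
  · intro x
    rw [smul_mulVec, dotProduct_smul, Complex.real_smul]
    exact mul_nonneg (Complex.zero_le_real.mpr hc) (hM.dotProduct_mulVec_nonneg x)

lemma aux_trace_sum {C W : Matrix (Fin n) (Fin n) ℂ} (hW : W.PosSemidef) :
    ∃ B : Matrix (Fin n) (Fin n) ℂ, W = Bᴴ * B ∧
      (C * W).trace = ∑ i, star (fun k => star (B i k)) ⬝ᵥ C *ᵥ (fun k => star (B i k)) := by
  obtain ⟨B, hB⟩ : ∃ B : Matrix (Fin n) (Fin n) ℂ, W = Bᴴ * B := by
    open scoped MatrixOrder in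
    obtain ⟨B, hB⟩ := CStarAlgebra.nonneg_iff_eq_star_mul_self.mp hW.nonneg
    exact ⟨B, hB⟩
  refine ⟨B, hB, ?_⟩
  rw [hB, (Matrix.mul_assoc C Bᴴ B).symm, Matrix.trace_mul_comm]
  rw [Matrix.trace]
  refine Finset.sum_congr rfl fun i _ => ?_
  simp only [Matrix.diag_apply, Matrix.mul_apply, Matrix.conjTranspose_apply,
    dotProduct, Matrix.mulVec, star_star, Pi.star_apply, Finset.mul_sum]

lemma aux_trace_nonneg {C W : Matrix (Fin n) (Fin n) ℂ} (hC : C.PosSemidef)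
    (hW : W.PosSemidef) : 0 ≤ ((C * W).trace).re := by
  obtain ⟨B, _, hsum⟩ := aux_trace_sum (C := C) hW
  rw [hsum, Complex.re_sum]
  exact Finset.sum_nonneg fun i _ => (Complex.nonneg_iff.mp (hC.dotProduct_mulVec_nonneg _)).1

lemma aux_trace_pos {C W : Matrix (Fin n) (Fin n) ℂ} (hC : C.PosDef)
    (hW : W.PosSemidef) (hW0 : W ≠ 0) : 0 < ((C * W).trace).re := by
  obtain ⟨B, hB, hsum⟩ := aux_trace_sum (C := C) hW
  rw [hsum, Complex.re_sum]
  have hBne : B ≠ 0 := by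
    rintro rfl; exact hW0 (by simp [hB])
  obtain ⟨i, hi⟩ : ∃ i, B i ≠ 0 := by
    by_contra h; push_neg at h
    exact hBne (funext h)
  refine Finset.sum_pos' (fun j _ => (Complex.nonneg_iff.mp (hC.posSemidef.dotProduct_mulVec_nonneg _)).1)
    ⟨i, Finset.mem_univ i, ?_⟩
  have hx : (fun k => star (B i k)) ≠ 0 := by
    intro h
    apply hi
    funext k
    have := congrFun h k
    simpa using congrArg star this
  exact (Complex.pos_iff.mp (hC.dotProduct_mulVec_pos hx)).1

lemma aux_trace_real {W : Matrix (Fin n) (Fin n) ℂ} (hW : W.IsHermitian) :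
    W.trace = ((W.trace).re : ℂ) := by
  have := Matrix.trace_conjTranspose W
  rw [hW] at this
  have him : (W.trace).im = 0 := by
    have := congrArg Complex.im this
    simp at this
    linarith
  exact Complex.ext (by simp) (by simp [him])

lemma aux_tr_pos_of_psd_ne {W : Matrix (Fin n) (Fin n) ℂ} (hW : W.PosSemidef)
    (hW0 : W ≠ 0) : 0 < (W.trace).re := by
  have h1 : (1 : Matrix (Fin n) (Fin n) ℂ).PosDef := Matrix.PosDef.one
  have := aux_trace_pos h1 hW hW0
  rwa [one_mul] at this

lemma aux_tr_smul_re (M : Matrix (Fin n) (Fin n) ℂ) (c : ℝ) :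
    (((c • M).trace)).re = c * (M.trace).re := by
  rw [Matrix.trace_smul]; simp [Complex.real_smul]

/-- solution correspondence in Lemma 4: minimizers of the
fractional SDR problem (P4) and of its Charnes–Cooper transformation (P5) are
mapped to each other by `Q = W/Re Tr(C₂·W)` and `W = Q/Re Tr(Q)`. -/
theorem stmt17 (n : ℕ) (hn : 0 < n)
    (C₁ C₂ A : Matrix (Fin n) (Fin n) ℂ)
    (h1 : C₁.PosSemidef) (h2 : C₂.PosDef) (hA : A.IsHermitian) (S : ℝ)
    (F₄ F₅ : Set (Matrix (Fin n) (Fin n) ℂ))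
    (hF₄ : F₄ = {W | W.PosSemidef ∧ W.trace = 1 ∧ ((A * W).trace).re = S})
    (hF₅ : F₅ = {Q | Q.PosSemidef ∧ ((C₂ * Q).trace).re = 1
        ∧ ((A * Q).trace).re = S * (Q.trace).re}) :
    (∀ Wstar ∈ F₄,
      (∀ W ∈ F₄, ((C₁ * Wstar).trace).re / ((C₂ * Wstar).trace).re
          ≤ ((C₁ * W).trace).re / ((C₂ * W).trace).re) →
      ((((C₂ * Wstar).trace).re)⁻¹ • Wstar ∈ F₅ ∧
        ∀ Q ∈ F₅, ((C₁ * ((((C₂ * Wstar).trace).re)⁻¹ • Wstar)).trace).re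
          ≤ ((C₁ * Q).trace).re)) ∧
    (∀ Qstar ∈ F₅,
      (∀ Q ∈ F₅, ((C₁ * Qstar).trace).re ≤ ((C₁ * Q).trace).re) →
      (0 < (Qstar.trace).re ∧
        ((Qstar.trace).re)⁻¹ • Qstar ∈ F₄ ∧
        ∀ W ∈ F₄,
          ((C₁ * (((Qstar.trace).re)⁻¹ • Qstar)).trace).re
              / ((C₂ * (((Qstar.trace).re)⁻¹ • Qstar)).trace).re
            ≤ ((C₁ * W).trace).re / ((C₂ * W).trace).re)) := by
  subst hF₄ hF₅
  -- membership lemma: scaling an F₄ element into F₅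
  have memF5 : ∀ W : Matrix (Fin n) (Fin n) ℂ, W.PosSemidef → W.trace = 1 →
      ((A * W).trace).re = S →
      0 < ((C₂ * W).trace).re ∧
      ((((C₂ * W).trace).re)⁻¹ • W ∈
        {Q | Q.PosSemidef ∧ ((C₂ * Q).trace).re = 1
          ∧ ((A * Q).trace).re = S * (Q.trace).re}) := by
    intro W hWpsd hWtr hWA
    have hW0 : W ≠ 0 := fun h => by simp [h] at hWtr
    have hdpos : 0 < ((C₂ * W).trace).re := aux_trace_pos h2 hWpsd hW0
    have hdne : ((C₂ * W).trace).re ≠ 0 := ne_of_gt hdpos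
    have hre1 : (W.trace).re = 1 := by rw [hWtr]; simp
    refine ⟨hdpos, aux_psd_smul hWpsd (inv_nonneg.mpr hdpos.le), ?_, ?_⟩
    · rw [aux_smul_trace_re]; field_simp
    · rw [aux_smul_trace_re, hWA, aux_tr_smul_re, hre1]; ring
  -- membership lemma: scaling an F₅ element into F₄
  have memF4 : ∀ Q : Matrix (Fin n) (Fin n) ℂ, Q.PosSemidef →
      ((C₂ * Q).trace).re = 1 → ((A * Q).trace).re = S * (Q.trace).re →
      0 < (Q.trace).re ∧
      (((Q.trace).re)⁻¹ • Q ∈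
        {W | W.PosSemidef ∧ W.trace = 1 ∧ ((A * W).trace).re = S}) := by
    intro Q hQpsd hQC hQA
    have hQ0 : Q ≠ 0 := fun h => by simp [h] at hQC
    have htpos : 0 < (Q.trace).re := aux_tr_pos_of_psd_ne hQpsd hQ0
    have htne : (Q.trace).re ≠ 0 := ne_of_gt htpos
    have hQtr : Q.trace = ((Q.trace).re : ℂ) := aux_trace_real hQpsd.isHermitian
    refine ⟨htpos, aux_psd_smul hQpsd (inv_nonneg.mpr htpos.le), ?_, ?_⟩
    · set t := (Q.trace).re with ht
      rw [Matrix.trace_smul, hQtr, Complex.real_smul, ← Complex.ofReal_mul,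
        inv_mul_cancel₀ htne, Complex.ofReal_one]
    · rw [aux_smul_trace_re, hQA]; field_simp
  constructor
  · rintro Wstar ⟨hWpsd, hWtr, hWA⟩ hmin
    obtain ⟨hdpos, hmem5⟩ := memF5 Wstar hWpsd hWtr hWA
    have hdne : ((C₂ * Wstar).trace).re ≠ 0 := ne_of_gt hdpos
    refine ⟨hmem5, ?_⟩
    rintro Q ⟨hQpsd, hQC, hQA⟩
    obtain ⟨htpos, hmem4⟩ := memF4 Q hQpsd hQC hQA
    have htne : (Q.trace).re ≠ 0 := ne_of_gt htpos
    have key := hmin _ hmem4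
    rw [aux_smul_trace_re, aux_smul_trace_re, hQC] at key
    have hsimp : ((Q.trace).re⁻¹ * ((C₁ * Q).trace).re) / ((Q.trace).re⁻¹ * 1)
        = ((C₁ * Q).trace).re := by field_simp
    rw [hsimp, div_eq_inv_mul] at key
    rw [aux_smul_trace_re]
    exact key
  · rintro Qstar ⟨hQpsd, hQC, hQA⟩ hmin
    obtain ⟨htpos, hmem4⟩ := memF4 Qstar hQpsd hQC hQA
    have htne : (Qstar.trace).re ≠ 0 := ne_of_gt htpos
    refine ⟨htpos, hmem4, ?_⟩
    rintro W ⟨hWpsd, hWtr, hWA⟩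
    obtain ⟨hdpos, hmem5⟩ := memF5 W hWpsd hWtr hWA
    have hdne : ((C₂ * W).trace).re ≠ 0 := ne_of_gt hdpos
    have key := hmin _ hmem5
    rw [aux_smul_trace_re] at key
    rw [aux_smul_trace_re, aux_smul_trace_re, hQC]
    have hsimp : ((Qstar.trace).re⁻¹ * ((C₁ * Qstar).trace).re)
        / ((Qstar.trace).re⁻¹ * 1) = ((C₁ * Qstar).trace).re := by field_simp
    rw [hsimp, div_eq_inv_mul]
    exact key
end
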